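/- Hoeffding's inequality for sampling without replacement: let x_1,...,x_N be real numbers with a = min x_i, b = max x_i, and μ = (1/N)·Σ x_i. If X_1,...,X_n is a uniformly random sample of size n drawn without replacement from {x_1,...,x_N}, then for all ε > 0, Pr(|(1/n)·Σ_{i=1}^n X_i − μ| ≥ ε) ≤ 2·exp(−2nε²/(b−a)²). -/

import Mathlib

open Real Finset
open scoped Classical

open Real

lemma phi_pos {p : ℝ} (hp0 : 0 ≤ p) (hp1 : p ≤ 1) (h : ℝ) :
    0 < 1 - p + p * exp h := by
  rcases eq_or_lt_of_le hp0 with h0 | h0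
  · simp [← h0]
  · have := exp_pos h
    nlinarith

lemma hoeff_core {p : ℝ} (hp0 : 0 ≤ p) (hp1 : p ≤ 1) (h : ℝ) :
    (1 - p) * exp (-p * h) + p * exp ((1 - p) * h) ≤ exp (h ^ 2 / 8) := by
  -- f t = t^2/8 + p t - log (1 - p + p e^t), g its derivative
  set φ : ℝ → ℝ := fun t => 1 - p + p * exp t with hφdef
  have hφpos : ∀ t, 0 < φ t := fun t => phi_pos hp0 hp1 t
  have hφd : ∀ t, HasDerivAt φ (p * exp t) t := by
    intro t
    exact ((Real.hasDerivAt_exp t).const_mul p).const_add (1 - p)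
  set f : ℝ → ℝ := fun t => t ^ 2 / 8 + p * t - Real.log (φ t) with hfdef
  set g : ℝ → ℝ := fun t => t / 4 + p - p * exp t / φ t with hgdef
  have hfd : ∀ t, HasDerivAt f (g t) t := by
    intro t
    have h1 : HasDerivAt (fun t : ℝ => t ^ 2 / 8 + p * t) (t / 4 + p) t := by
      have := ((hasDerivAt_pow 2 t).div_const 8).add ((hasDerivAt_id t).const_mul p)
      refine this.congr_deriv ?_
      rw [show (2:ℕ) - 1 = 1 from rfl]; push_cast; ring
    have h2 : HasDerivAt (fun t => Real.log (φ t)) (p * exp t / φ t) t :=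
      (hφd t).log (hφpos t).ne'
    exact h1.sub h2
  have hgd : ∀ t, HasDerivAt g (1/4 - (p * exp t * (1 - p)) / (φ t) ^ 2) t := by
    intro t
    have h1 : HasDerivAt (fun t : ℝ => t / 4 + p) (1/4) t := by
      simpa using ((hasDerivAt_id t).div_const 4).add_const p
    have h2 : HasDerivAt (fun t => p * exp t / φ t)
        ((p * exp t * φ t - p * exp t * (p * exp t)) / (φ t) ^ 2) t :=
      ((Real.hasDerivAt_exp t).const_mul p).div (hφd t) (hφpos t).ne'
    have := h1.sub h2
    refine this.congr_deriv ?_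
    have : φ t = 1 - p + p * exp t := rfl
    congr 1; congr 1; rw [this]; ring
  have hgmono : Monotone g := by
    apply monotone_of_hasDerivAt_nonneg hgd
    intro t
    have hφ := hφpos t
    have he := exp_pos t
    have : (p * exp t * (1 - p)) / (φ t) ^ 2 ≤ 1/4 := by
      rw [div_le_iff₀ (by positivity)]
      have hphi : φ t = (1 - p) + p * exp t := rfl
      rw [hphi]
      nlinarith [sq_nonneg ((1 - p) - p * exp t), mul_nonneg hp0 he.le]
    simp only [Pi.zero_apply]
    linarith
  have hg0 : g 0 = 0 := by
    simp only [hgdef, hφdef, exp_zero, mul_one]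
    field_simp
    ring
  have hf0 : f 0 = 0 := by
    simp only [hfdef, hφdef, exp_zero, mul_one]
    norm_num
  -- f t ≥ 0 for all t
  have hfnonneg : ∀ t, 0 ≤ f t := by
    intro t
    rcases lt_trichotomy t 0 with ht | ht | ht
    · obtain ⟨c, hc, hceq⟩ := exists_hasDerivAt_eq_slope f g ht
        (fun u _ => (hfd u).continuousAt.continuousWithinAt) (fun u _ => hfd u)
      have hgc : g c ≤ 0 := hg0 ▸ hgmono hc.2.le
      have hpos : (0:ℝ) - t > 0 := by linarith
      have : (f 0 - f t) / (0 - t) ≤ 0 := hceq ▸ hgc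
      rw [hf0] at this
      rw [div_nonpos_iff] at this
      rcases this with ⟨h1, h2⟩ | ⟨h1, h2⟩
      · linarith
      · linarith
    · rw [ht, hf0]
    · obtain ⟨c, hc, hceq⟩ := exists_hasDerivAt_eq_slope f g ht
        (fun u _ => (hfd u).continuousAt.continuousWithinAt) (fun u _ => hfd u)
      have hgc : 0 ≤ g c := hg0 ▸ hgmono hc.1.le
      have : 0 ≤ (f t - f 0) / (t - 0) := hceq ▸ hgc
      rw [hf0] at this
      rcases (div_nonneg_iff.mp this) with ⟨h1, h2⟩ | ⟨h1, h2⟩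
      · linarith
      · linarith
  -- conclude
  have hft := hfnonneg h
  have hlog : Real.log (φ h) ≤ h ^ 2 / 8 + p * h := by
    simp only [hfdef] at hft; linarith
  have heq : (1 - p) * exp (-p * h) + p * exp ((1 - p) * h) = exp (-p * h) * φ h := by
    have h1 : φ h = 1 - p + p * exp h := rfl
    have e1 : exp ((1 - p) * h) = exp (-p * h) * exp h := by
      rw [← Real.exp_add]; ring_nf
    rw [h1, e1]; ring
  rw [heq]
  calc exp (-p * h) * φ h = exp (-p * h + Real.log (φ h)) := by
        rw [Real.exp_add, Real.exp_log (hφpos h)]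
    _ ≤ exp (-p * h + (h ^ 2 / 8 + p * h)) := by
        apply Real.exp_le_exp.mpr; linarith
    _ = exp (h ^ 2 / 8) := by ring_nf

lemma sum_exp_le_aux {ι : Type*} (s : Finset ι) (D : ι → ℝ) (A B l c : ℝ)
    (hmem : ∀ j ∈ s, D j ∈ Set.Icc A B) (hsum : ∑ j ∈ s, D j = 0)
    (hBA : B - A ≤ c) (hc : 0 ≤ c)
    (hcore : ∀ p h : ℝ, 0 ≤ p → p ≤ 1 →
      (1 - p) * exp (-p * h) + p * exp ((1 - p) * h) ≤ exp (h ^ 2 / 8)) :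
    ∑ j ∈ s, exp (l * D j) ≤ s.card * exp (l ^ 2 * c ^ 2 / 8) := by
  rcases s.eq_empty_or_nonempty with rfl | hs
  · simp
  have hm : (0:ℝ) < s.card := by exact_mod_cast Finset.card_pos.mpr hs
  have hexpc : (1:ℝ) ≤ exp (l ^ 2 * c ^ 2 / 8) := by
    rw [← Real.exp_zero]; apply Real.exp_le_exp.mpr; positivity
  obtain ⟨j₀, hj₀⟩ := hs
  have hAB : A ≤ B := le_trans (hmem j₀ hj₀).1 (hmem j₀ hj₀).2
  -- A ≤ 0 ≤ B
  have hA0 : A ≤ 0 := by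
    by_contra hA
    push_neg at hA
    have : (0:ℝ) < ∑ j ∈ s, D j := by
      calc (0:ℝ) < ∑ j ∈ s, A := by rw [Finset.sum_const, nsmul_eq_mul]; positivity
        _ ≤ ∑ j ∈ s, D j := Finset.sum_le_sum fun j hj => (hmem j hj).1
    linarith
  have hB0 : 0 ≤ B := by
    by_contra hB
    push_neg at hB
    have : ∑ j ∈ s, D j < 0 := by
      calc ∑ j ∈ s, D j ≤ ∑ j ∈ s, B := Finset.sum_le_sum fun j hj => (hmem j hj).2
        _ < 0 := by
            rw [Finset.sum_const, nsmul_eq_mul]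
            exact mul_neg_of_pos_of_neg hm hB
    linarith
  rcases eq_or_lt_of_le hAB with hABeq | hABlt
  · -- A = B ⇒ A = B = 0, all D j = 0
    have hA : A = 0 := le_antisymm hA0 (hABeq ▸ hB0)
    have : ∀ j ∈ s, D j = 0 := fun j hj =>
      le_antisymm (hA ▸ hABeq ▸ (hmem j hj).2) (hA ▸ (hmem j hj).1)
    calc ∑ j ∈ s, exp (l * D j) = ∑ j ∈ s, 1 := by
          apply Finset.sum_congr rfl; intro j hj; rw [this j hj]; simp
      _ = (s.card : ℝ) := by simp
      _ ≤ s.card * exp (l ^ 2 * c ^ 2 / 8) := le_mul_of_one_le_right hm.le hexpc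
  -- main case A < B
  have hBApos : (0:ℝ) < B - A := by linarith
  -- convexity bound pointwise
  have hstep : ∀ j ∈ s, exp (l * D j) ≤
      ((B - D j) * exp (l * A) + (D j - A) * exp (l * B)) / (B - A) := by
    intro j hj
    obtain ⟨h1, h2⟩ := hmem j hj
    set θ : ℝ := (B - D j) / (B - A) with hθ
    have hθ0 : 0 ≤ θ := div_nonneg (by linarith) hBApos.le
    have hθ1 : θ ≤ 1 := by rw [div_le_one hBApos]; linarith
    have hsum1 : θ + (1 - θ) = 1 := by ring
    have hcx := convexOn_exp.2 (Set.mem_univ (l * A)) (Set.mem_univ (l * B))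
      hθ0 (by linarith : (0:ℝ) ≤ 1 - θ) hsum1
    have harg : θ • (l * A) + (1 - θ) • (l * B) = l * D j := by
      simp only [smul_eq_mul, hθ]
      field_simp
      ring
    rw [harg] at hcx
    calc exp (l * D j) ≤ θ * exp (l * A) + (1 - θ) * exp (l * B) := by
          simpa [smul_eq_mul] using hcx
      _ = ((B - D j) * exp (l * A) + (D j - A) * exp (l * B)) / (B - A) := by
          rw [hθ]; field_simp; ring
  have hsum2 : ∑ j ∈ s, exp (l * D j) ≤
      (s.card * B * exp (l * A) - s.card * A * exp (l * B)) / (B - A) := by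
    calc ∑ j ∈ s, exp (l * D j)
        ≤ ∑ j ∈ s, ((B - D j) * exp (l * A) + (D j - A) * exp (l * B)) / (B - A) :=
          Finset.sum_le_sum hstep
      _ = (s.card * B * exp (l * A) - s.card * A * exp (l * B)) / (B - A) := by
          rw [← Finset.sum_div]
          congr 1
          rw [Finset.sum_add_distrib, ← Finset.sum_mul, ← Finset.sum_mul]
          simp only [Finset.sum_sub_distrib, Finset.sum_const, nsmul_eq_mul, hsum]
          ring
  -- apply the core inequality with p = -A/(B-A), h = l*(B-A)
  set p : ℝ := -A / (B - A) with hp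
  set hh : ℝ := l * (B - A) with hhh
  have hp0 : 0 ≤ p := by rw [hp]; apply div_nonneg (by linarith) hBApos.le
  have hp1 : p ≤ 1 := by rw [hp, div_le_one hBApos]; linarith
  have hc1 : -p * hh = l * A := by rw [hp, hhh]; field_simp
  have hc2 : (1 - p) * hh = l * B := by
    rw [hp, hhh]; field_simp; ring
  have h1p : 1 - p = B / (B - A) := by rw [hp]; field_simp; ring
  have hkey := hcore p hh hp0 hp1
  rw [hc1, hc2, h1p, hp] at hkey
  have hfin : (s.card * B * exp (l * A) - s.card * A * exp (l * B)) / (B - A)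
      ≤ s.card * exp (hh ^ 2 / 8) := by
    have := mul_le_mul_of_nonneg_left hkey hm.le
    calc (s.card * B * exp (l * A) - s.card * A * exp (l * B)) / (B - A)
        = s.card * (B / (B - A) * exp (l * A) + -A / (B - A) * exp (l * B)) := by
          field_simp; ring
      _ ≤ s.card * exp (hh ^ 2 / 8) := this
  have hlast : exp (hh ^ 2 / 8) ≤ exp (l ^ 2 * c ^ 2 / 8) := by
    apply Real.exp_le_exp.mpr
    rw [hhh]
    have : (l * (B - A)) ^ 2 = l ^ 2 * (B - A) ^ 2 := by ring
    rw [this]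
    have h2 : (B - A) ^ 2 ≤ c ^ 2 := by nlinarith
    have := sq_nonneg l
    nlinarith
  calc ∑ j ∈ s, exp (l * D j)
      ≤ (s.card * B * exp (l * A) - s.card * A * exp (l * B)) / (B - A) := hsum2
    _ ≤ s.card * exp (hh ^ 2 / 8) := hfin
    _ ≤ s.card * exp (l ^ 2 * c ^ 2 / 8) := by
        apply mul_le_mul_of_nonneg_left hlast hm.le

variable {ι : Type*} [Fintype ι] [DecidableEq ι]

/-- The finset of injections from `Fin n` into a finset `s`. -/
noncomputable def Tinj (s : Finset ι) (n : ℕ) : Finset (Fin n → ι) :=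
  Finset.univ.filter (fun f => Function.Injective f ∧ ∀ i, f i ∈ s)

lemma mem_Tinj {s : Finset ι} {n : ℕ} {f : Fin n → ι} :
    f ∈ Tinj s n ↔ Function.Injective f ∧ ∀ i, f i ∈ s := by
  simp [Tinj]

lemma sum_Tinj_succ {M : Type*} [AddCommMonoid M] (s : Finset ι) (n : ℕ)
    (g : (Fin (n + 1) → ι) → M) :
    ∑ f ∈ Tinj s (n + 1), g f
      = ∑ j ∈ s, ∑ f ∈ Tinj (s.erase j) n, g (Fin.cons j f) := by
  rw [Finset.sum_sigma']
  apply Finset.sum_nbij' (i := fun f => (⟨f 0, Fin.tail f⟩ : Σ _ : ι, (Fin n → ι)))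
    (j := fun q => Fin.cons q.1 q.2)
  · intro f hf
    rw [mem_Tinj] at hf
    obtain ⟨hinj, hmem⟩ := hf
    rw [Finset.mem_sigma]
    refine ⟨hmem 0, ?_⟩
    rw [mem_Tinj]
    constructor
    · intro i j hij
      exact Fin.succ_injective n (hinj hij)
    · intro i
      rw [Finset.mem_erase]
      exact ⟨fun h => (Fin.succ_ne_zero i) (hinj h), hmem _⟩
  · intro q hq
    rw [Finset.mem_sigma] at hq
    obtain ⟨hj, hf⟩ := hq
    rw [mem_Tinj] at hf ⊢
    obtain ⟨hinj, hmem⟩ := hf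
    constructor
    · apply Fin.cons_injective_of_injective _ hinj
      rintro ⟨i, hi⟩
      exact (Finset.mem_erase.mp (hmem i)).1 hi
    · intro i
      refine Fin.cases ?_ ?_ i
      · simpa using hj
      · intro k
        simp only [Fin.cons_succ]
        exact Finset.mem_of_mem_erase (hmem k)
  · intro f _
    exact Fin.cons_self_tail f
  · intro q _
    ext : 1
    · simp
    · simp [Fin.tail_cons]
  · intro f _
    rw [Fin.cons_self_tail]

lemma card_Tinj (s : Finset ι) : ∀ n, (Tinj s n).card = s.card.descFactorial n := by
  intro n
  induction n generalizing s with
  | zero =>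
      have : Tinj s 0 = Finset.univ := by
        ext f
        simp only [mem_Tinj, Finset.mem_univ, iff_true]
        exact ⟨fun i j _ => Subsingleton.elim i j, fun i => i.elim0⟩
      rw [this, Finset.card_univ]
      simp
  | succ n ih =>
      have hrec := sum_Tinj_succ (M := ℕ) s n (fun _ => 1)
      simp only [Finset.sum_const, smul_eq_mul, mul_one] at hrec
      rw [hrec]
      rcases s.eq_empty_or_nonempty with rfl | hs
      · simp
      obtain ⟨m, hm⟩ : ∃ m, s.card = m + 1 :=
        ⟨s.card - 1, (Nat.succ_pred_eq_of_pos (Finset.card_pos.mpr hs)).symm⟩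
      calc ∑ j ∈ s, (Tinj (s.erase j) n).card
          = ∑ j ∈ s, m.descFactorial n := by
            apply Finset.sum_congr rfl
            intro j hj
            rw [ih, Finset.card_erase_of_mem hj, hm]
            simp
        _ = s.card * m.descFactorial n := by
            rw [Finset.sum_const, smul_eq_mul]
        _ = s.card.descFactorial (n + 1) := by
            rw [hm, Nat.succ_descFactorial_succ]

open Real Finset
open scoped Classical

variable {ι : Type*} [Fintype ι] [DecidableEq ι]

lemma key_mgf (a b l : ℝ) (x : ι → ℝ) (hx : ∀ i, a ≤ x i ∧ x i ≤ b)
    (hcore : ∀ p h : ℝ, 0 ≤ p → p ≤ 1 →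
      (1 - p) * exp (-p * h) + p * exp ((1 - p) * h) ≤ exp (h ^ 2 / 8))
    (hhoeff : ∀ (s : Finset ι) (D : ι → ℝ) (A B l c : ℝ),
      (∀ j ∈ s, D j ∈ Set.Icc A B) → ∑ j ∈ s, D j = 0 → B - A ≤ c → 0 ≤ c →
      ∑ j ∈ s, exp (l * D j) ≤ s.card * exp (l ^ 2 * c ^ 2 / 8)) :
    ∀ (n : ℕ) (s : Finset ι), n ≤ s.card →
    ∑ f ∈ Tinj s n, exp (l * (∑ i, x (f i) - n * ((∑ j ∈ s, x j) / s.card)))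
      ≤ (Tinj s n).card * exp (n * (l ^ 2 * (b - a) ^ 2 / 8)) := by
  intro n
  induction n with
  | zero =>
      intro s _
      simp
  | succ n ih =>
      intro s hns
      have hm1 : 1 ≤ s.card := le_trans (Nat.succ_le_succ (Nat.zero_le n)) hns
      have hsne : s.Nonempty := Finset.card_pos.mp hm1
      set M : ℝ := (s.card : ℝ) with hM
      have hM1 : (1:ℝ) ≤ M := by rw [hM]; exact_mod_cast hm1
      have hM0 : M ≠ 0 := by linarith
      set S : ℝ := ∑ j ∈ s, x j with hS
      set μs : ℝ := S / M with hμs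
      set D : ι → ℝ := fun j => x j + n * ((S - x j) / (M - 1)) - (n + 1) * μs with hD
      have hba : 0 ≤ b - a := by
        obtain ⟨j0, hj0⟩ := hsne
        have := hx j0
        linarith [this.1, this.2]
      set c : ℝ := b - a with hc
      set En : ℝ := exp (n * (l ^ 2 * c ^ 2 / 8)) with hEn
      set E1 : ℝ := exp (l ^ 2 * c ^ 2 / 8) with hE1
      -- rewrite the sum via the recursion
      rw [sum_Tinj_succ]
      have hterm : ∀ j ∈ s, ∀ f ∈ Tinj (s.erase j) n,
          exp (l * (∑ i, x ((Fin.cons j f : Fin (n+1) → ι) i) - (n + 1 : ℕ) * μs))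
            = exp (l * D j) *
              exp (l * (∑ i, x (f i) -
                n * ((∑ k ∈ s.erase j, x k) / (s.erase j).card))) := by
        intro j hj f _
        rw [← Real.exp_add]
        congr 1
        have h1 : ∑ i, x ((Fin.cons j f : Fin (n+1) → ι) i) = x j + ∑ i, x (f i) := by
          rw [Fin.sum_univ_succ]
          simp
        have h2 : ∑ k ∈ s.erase j, x k = S - x j := by
          rw [hS]
          exact Finset.sum_erase_eq_sub hj
        have h3 : ((s.erase j).card : ℝ) = M - 1 := by
          rw [Finset.card_erase_of_mem hj, Nat.cast_sub hm1]
          simp [hM]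
        rw [h1, h2, h3, hD]
        push_cast
        ring
      -- bound inner sums with the induction hypothesis
      have hKn : ∀ j ∈ s, ((Tinj (s.erase j) n).card : ℝ)
          = ((s.card - 1).descFactorial n : ℝ) := by
        intro j hj
        rw [card_Tinj, Finset.card_erase_of_mem hj]
      set K : ℝ := ((s.card - 1).descFactorial n : ℝ) with hK
      have hinner : ∀ j ∈ s,
          ∑ f ∈ Tinj (s.erase j) n,
            exp (l * (∑ i, x (f i) -
              n * ((∑ k ∈ s.erase j, x k) / (s.erase j).card)))
            ≤ K * En := by
        intro j hj
        have hle : n ≤ (s.erase j).card := by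
          rw [Finset.card_erase_of_mem hj]
          omega
        have := ih (s.erase j) hle
        rw [hKn j hj] at this
        exact this
      -- the D j values: mean zero and bounded in an interval of length ≤ c
      have hDprops : ∃ A B : ℝ, (∀ j ∈ s, D j ∈ Set.Icc A B) ∧ B - A ≤ c ∧
          ∑ j ∈ s, D j = 0 := by
        rcases eq_or_lt_of_le hm1 with hm1' | hm2
        · -- s.card = 1, hence n = 0 and s = {j0}
          have hn0 : n = 0 := by omega
          obtain ⟨j0, hj0⟩ := Finset.card_eq_one.mp hm1'.symm
          refine ⟨0, 0, ?_, by linarith, ?_⟩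
          · intro j hj
            rw [hj0, Finset.mem_singleton] at hj
            subst hj
            have hMeq : M = 1 := by rw [hM, hm1'.symm]; simp
            have hSeq : S = x j := by rw [hS, hj0, Finset.sum_singleton]
            simp [hD, hn0, hμs, hSeq, hMeq]
          · rw [hj0, Finset.sum_singleton]
            have hMeq : M = 1 := by rw [hM, hm1'.symm]; simp
            have hSeq : S = x j0 := by rw [hS, hj0, Finset.sum_singleton]
            simp [hD, hn0, hμs, hSeq, hMeq]
        · -- s.card ≥ 2
          have hM2 : (2:ℝ) ≤ M := by
            rw [hM]; exact_mod_cast hm2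
          have hM1ne : M - 1 ≠ 0 := by linarith
          have hnM : (n:ℝ) ≤ M - 1 := by
            have : (n:ℝ) + 1 ≤ M := by rw [hM]; exact_mod_cast hns
            linarith
          set t : ℝ := (M - 1 - n) / (M - 1) with ht
          set K0 : ℝ := n * S / (M - 1) - (n + 1) * (S / M) with hK0
          have ht0 : 0 ≤ t := div_nonneg (by linarith) (by linarith)
          have ht1 : t ≤ 1 := by
            rw [ht, div_le_one (by linarith)]
            linarith [Nat.cast_nonneg (α := ℝ) n]
          have haff : ∀ j, D j = t * x j + K0 := by
            intro j
            rw [hD, ht, hK0, hμs]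
            field_simp
            ring
          refine ⟨t * a + K0, t * b + K0, ?_, ?_, ?_⟩
          · intro j hj
            rw [haff j]
            constructor
            · have := mul_le_mul_of_nonneg_left (hx j).1 ht0
              linarith
            · have := mul_le_mul_of_nonneg_left (hx j).2 ht0
              linarith
          · have : t * b + K0 - (t * a + K0) = t * (b - a) := by ring
            rw [this, hc]
            nlinarith
          · have : ∑ j ∈ s, D j = ∑ j ∈ s, (t * x j + K0) := by
              exact Finset.sum_congr rfl fun j _ => haff j
            rw [this, Finset.sum_add_distrib, ← Finset.mul_sum, Finset.sum_const,
              nsmul_eq_mul, ← hS, ← hM, ht, hK0]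
            field_simp
            ring
      obtain ⟨A, B, hmem, hBA, hsum0⟩ := hDprops
      have hDsum : ∑ j ∈ s, exp (l * D j) ≤ M * E1 :=
        hhoeff s D A B l c hmem hsum0 hBA hba
      -- put the pieces together
      have hEnpos : 0 < En := Real.exp_pos _
      have hE1pos : 0 < E1 := Real.exp_pos _
      have hKnn : 0 ≤ K := Nat.cast_nonneg _
      calc ∑ j ∈ s, ∑ f ∈ Tinj (s.erase j) n,
              exp (l * (∑ i, x ((Fin.cons j f : Fin (n+1) → ι) i) - (n + 1 : ℕ) * μs))
          = ∑ j ∈ s, exp (l * D j) *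
              ∑ f ∈ Tinj (s.erase j) n,
                exp (l * (∑ i, x (f i) -
                  n * ((∑ k ∈ s.erase j, x k) / (s.erase j).card))) := by
            apply Finset.sum_congr rfl
            intro j hj
            rw [Finset.mul_sum]
            exact Finset.sum_congr rfl fun f hf => hterm j hj f hf
        _ ≤ ∑ j ∈ s, exp (l * D j) * (K * En) := by
            apply Finset.sum_le_sum
            intro j hj
            exact mul_le_mul_of_nonneg_left (hinner j hj) (Real.exp_pos _).le
        _ = (∑ j ∈ s, exp (l * D j)) * (K * En) := by
            rw [Finset.sum_mul]
        _ ≤ (M * E1) * (K * En) := by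
            apply mul_le_mul_of_nonneg_right hDsum
            positivity
        _ = ((Tinj s (n+1)).card : ℝ) * exp ((n+1 : ℕ) * (l ^ 2 * c ^ 2 / 8)) := by
            rw [card_Tinj]
            obtain ⟨m, hm⟩ : ∃ m, s.card = m + 1 :=
              ⟨s.card - 1, by omega⟩
            rw [hm, Nat.succ_descFactorial_succ]
            have : m + 1 - 1 = m := by omega
            rw [hK, hm, this, hEn, hE1, hM, hm]
            push_cast
            rw [show ((n:ℝ) + 1) * (l ^ 2 * c ^ 2 / 8)
                = l ^ 2 * c ^ 2 / 8 + (n:ℝ) * (l ^ 2 * c ^ 2 / 8) by ring, Real.exp_add]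
            ring

open Real Finset
open scoped Classical

variable {ι : Type*} [Fintype ι] [DecidableEq ι]

lemma chernoff_side (a b l t : ℝ) (x : ι → ℝ) (hx : ∀ i, a ≤ x i ∧ x i ≤ b)
    (hcore : ∀ p h : ℝ, 0 ≤ p → p ≤ 1 →
      (1 - p) * exp (-p * h) + p * exp ((1 - p) * h) ≤ exp (h ^ 2 / 8))
    (hhoeff : ∀ (s : Finset ι) (D : ι → ℝ) (A B l c : ℝ),
      (∀ j ∈ s, D j ∈ Set.Icc A B) → ∑ j ∈ s, D j = 0 → B - A ≤ c → 0 ≤ c →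
      ∑ j ∈ s, exp (l * D j) ≤ s.card * exp (l ^ 2 * c ^ 2 / 8))
    (n : ℕ) (hn : n ≤ Fintype.card ι) :
    (((Tinj (univ : Finset ι) n).filter fun f =>
        t ≤ l * (∑ i, x (f i) - n * ((∑ j, x j) / (Fintype.card ι)))).card : ℝ)
      ≤ ((Tinj (univ : Finset ι) n).card : ℝ)
        * exp (n * (l ^ 2 * (b - a) ^ 2 / 8) - t) := by
  set μ : ℝ := (∑ j, x j) / (Fintype.card ι) with hμ
  set G : (Fin n → ι) → ℝ := fun f => exp (l * (∑ i, x (f i) - n * μ)) with hG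
  have hμ' : μ = (∑ j ∈ univ, x j) / ((univ : Finset ι).card) := by
    rw [hμ, Finset.card_univ]
  have h1 : (((Tinj (univ : Finset ι) n).filter fun f =>
      t ≤ l * (∑ i, x (f i) - n * μ)).card : ℝ) * exp t
      ≤ ∑ f ∈ (Tinj (univ : Finset ι) n).filter
          (fun f => t ≤ l * (∑ i, x (f i) - n * μ)), G f := by
    calc (((Tinj (univ : Finset ι) n).filter fun f =>
          t ≤ l * (∑ i, x (f i) - n * μ)).card : ℝ) * exp t
        = ∑ _f ∈ (Tinj (univ : Finset ι) n).filter
            (fun f => t ≤ l * (∑ i, x (f i) - n * μ)), exp t := by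
          rw [Finset.sum_const, nsmul_eq_mul]
      _ ≤ _ := by
          apply Finset.sum_le_sum
          intro f hf
          rw [Finset.mem_filter] at hf
          exact Real.exp_le_exp.mpr hf.2
  have h2 : ∑ f ∈ (Tinj (univ : Finset ι) n).filter
        (fun f => t ≤ l * (∑ i, x (f i) - n * μ)), G f
      ≤ ∑ f ∈ Tinj (univ : Finset ι) n, G f := by
    apply Finset.sum_le_sum_of_subset_of_nonneg (Finset.filter_subset _ _)
    intro f _ _
    exact (Real.exp_pos _).le
  have h3 : ∑ f ∈ Tinj (univ : Finset ι) n, G f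
      ≤ ((Tinj (univ : Finset ι) n).card : ℝ)
        * exp (n * (l ^ 2 * (b - a) ^ 2 / 8)) := by
    have := key_mgf a b l x hx hcore hhoeff n univ (by rw [Finset.card_univ]; exact hn)
    rw [hG, hμ']
    exact this
  have hcomb := le_trans h1 (le_trans h2 h3)
  have het : 0 < exp t := Real.exp_pos t
  rw [Real.exp_sub]
  calc (((Tinj (univ : Finset ι) n).filter fun f =>
        t ≤ l * (∑ i, x (f i) - n * μ)).card : ℝ)
      = (((Tinj (univ : Finset ι) n).filter fun f =>
          t ≤ l * (∑ i, x (f i) - n * μ)).card : ℝ) * exp t / exp t := by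
        field_simp
    _ ≤ ((Tinj (univ : Finset ι) n).card : ℝ)
          * exp (n * (l ^ 2 * (b - a) ^ 2 / 8)) / exp t := by gcongr
    _ = ((Tinj (univ : Finset ι) n).card : ℝ)
          * (exp (n * (l ^ 2 * (b - a) ^ 2 / 8)) / exp t) := mul_div_assoc _ _ _

open Real Finset
open scoped Classical

lemma card_emb_filter {N n : ℕ} (P : (Fin n → Fin N) → Prop) :
    (Finset.univ.filter fun f : Fin n ↪ Fin N => P f).card
      = ((Tinj (univ : Finset (Fin N)) n).filter fun g => P g).card := by
  have hj : ∀ g ∈ (Tinj (univ : Finset (Fin N)) n).filter fun g => P g,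
      Function.Injective g := by
    intro g hg
    rw [Finset.mem_filter, mem_Tinj] at hg
    exact hg.1.1
  refine Finset.card_bij' (fun f _ => (f : Fin n → Fin N))
    (fun g hg => ⟨g, hj g hg⟩) ?_ ?_ ?_ ?_
  · intro f hf
    rw [Finset.mem_filter] at hf ⊢
    rw [mem_Tinj]
    exact ⟨⟨f.injective, fun i => Finset.mem_univ _⟩, hf.2⟩
  · intro g hg
    rw [Finset.mem_filter] at hg ⊢
    exact ⟨Finset.mem_univ _, hg.2⟩
  · intro f hf
    rfl
  · intro g hg
    rfl

theorem stmt9 {N n : ℕ} (hN : 0 < N) (x : Fin N → ℝ) (ε : ℝ) (hε : 0 < ε) :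
    ((Finset.univ.filter fun f : Fin n ↪ Fin N =>
          ε ≤ |(1 / n) * ∑ i, x (f i) - (1 / N) * ∑ j, x j|).card : ℝ) /
        (Fintype.card (Fin n ↪ Fin N)) ≤
      2 * Real.exp (-2 * n * ε ^ 2 /
        ((Finset.univ.sup' ⟨⟨0, hN⟩, Finset.mem_univ _⟩ x -
          Finset.univ.inf' ⟨⟨0, hN⟩, Finset.mem_univ _⟩ x) ^ 2)) := by
  set b : ℝ := Finset.univ.sup' ⟨⟨0, hN⟩, Finset.mem_univ _⟩ x with hb
  set a : ℝ := Finset.univ.inf' ⟨⟨0, hN⟩, Finset.mem_univ _⟩ x with ha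
  have hab : ∀ i, a ≤ x i ∧ x i ≤ b := fun i =>
    ⟨Finset.inf'_le _ (Finset.mem_univ i), Finset.le_sup' _ (Finset.mem_univ i)⟩
  have hba : 0 ≤ b - a := by
    have := hab ⟨0, hN⟩
    linarith [this.1, this.2]
  set c : ℝ := b - a with hc
  -- trivial case n = 0
  rcases Nat.eq_zero_or_pos n with rfl | hn
  · have hq1 : Fintype.card (Fin 0 ↪ Fin N) = 1 := by
      simp [Fintype.card_embedding_eq]
    have hle : (Finset.univ.filter fun f : Fin 0 ↪ Fin N =>
        ε ≤ |(1 / (0:ℕ)) * ∑ i, x (f i) - (1 / N) * ∑ j, x j|).card ≤ 1 := by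
      calc _ ≤ (Finset.univ : Finset (Fin 0 ↪ Fin N)).card := Finset.card_filter_le _ _
        _ = 1 := by rw [Finset.card_univ, hq1]
    rw [hq1]
    have h2 : (-2 : ℝ) * (0:ℕ) * ε ^ 2 / c ^ 2 = 0 := by norm_num
    rw [h2, Real.exp_zero]
    have : ((Finset.univ.filter fun f : Fin 0 ↪ Fin N =>
        ε ≤ |(1 / (0:ℕ)) * ∑ i, x (f i) - (1 / N) * ∑ j, x j|).card : ℝ) ≤ 1 := by
      exact_mod_cast hle
    push_cast
    linarith
  -- case n > N : no injections
  rcases lt_or_ge N n with hNn | hnN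
  · have hq0 : Fintype.card (Fin n ↪ Fin N) = 0 := by
      simp [Fintype.card_embedding_eq]
      simpa using hNn
    rw [hq0]
    push_cast
    rw [div_zero]
    positivity
  -- now 1 ≤ n ≤ N
  have hQeq : (Fintype.card (Fin n ↪ Fin N)) = (Tinj (univ : Finset (Fin N)) n).card := by
    rw [Fintype.card_embedding_eq, card_Tinj, Finset.card_univ]
    simp
  have hQpos : 0 < (Tinj (univ : Finset (Fin N)) n).card := by
    rw [card_Tinj, Finset.card_univ, Fintype.card_fin]
    refine Nat.pos_of_ne_zero fun h => ?_
    exact absurd (Nat.descFactorial_eq_zero_iff_lt.mp h) (not_lt.mpr hnN)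
  have hnr : (0:ℝ) < (n:ℝ) := by exact_mod_cast hn
  have hNr : (0:ℝ) < (N:ℝ) := by exact_mod_cast hN
  -- degenerate case c = 0 : all values equal, event empty
  rcases eq_or_lt_of_le hba with hc0 | hcpos
  · have hxa : ∀ i, x i = a := by
      intro i
      have := hab i
      have hba' : b = a := by linarith
      rw [hba'] at this
      linarith [this.1, this.2]
    have hempty : (Finset.univ.filter fun f : Fin n ↪ Fin N =>
        ε ≤ |(1 / n) * ∑ i, x (f i) - (1 / N) * ∑ j, x j|) = ∅ := by
      rw [Finset.filter_eq_empty_iff]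
      intro f _
      have h1 : ∑ i, x (f i) = n * a := by
        rw [Finset.sum_congr rfl fun i _ => hxa (f i)]
        simp [mul_comm]
      have h2 : ∑ j, x j = N * a := by
        rw [Finset.sum_congr rfl fun j _ => hxa j]
        simp [mul_comm]
      rw [h1, h2]
      have : (1 / (n:ℝ)) * ((n:ℝ) * a) - (1 / (N:ℝ)) * ((N:ℝ) * a) = 0 := by
        field_simp
        ring
      rw [this]
      simp only [abs_zero]
      push_neg
      exact hε
    rw [hempty]
    simp only [Finset.card_empty, Nat.cast_zero, zero_div]
    positivity
  -- main case
  set l : ℝ := 4 * ε / c ^ 2 with hl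
  set t : ℝ := 4 * n * ε ^ 2 / c ^ 2 with ht
  have hlpos : 0 < l := by rw [hl]; positivity
  have hcore : ∀ p h : ℝ, 0 ≤ p → p ≤ 1 →
      (1 - p) * Real.exp (-p * h) + p * Real.exp ((1 - p) * h) ≤ Real.exp (h ^ 2 / 8) :=
    fun p h hp0 hp1 => hoeff_core hp0 hp1 h
  have hhoeff : ∀ (s : Finset (Fin N)) (D : Fin N → ℝ) (A B l c : ℝ),
      (∀ j ∈ s, D j ∈ Set.Icc A B) → ∑ j ∈ s, D j = 0 → B - A ≤ c → 0 ≤ c →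
      ∑ j ∈ s, Real.exp (l * D j) ≤ s.card * Real.exp (l ^ 2 * c ^ 2 / 8) :=
    fun s D A B l c h1 h2 h3 h4 => sum_exp_le_aux s D A B l c h1 h2 h3 h4 hcore
  have hnN' : n ≤ Fintype.card (Fin N) := by simpa using hnN
  set μ : ℝ := (∑ j, x j) / (Fintype.card (Fin N)) with hμ
  -- the two one-sided events
  set Fp := Finset.univ.filter (fun f : Fin n ↪ Fin N =>
    t ≤ l * (∑ i, x (f i) - n * μ)) with hFp
  set Fm := Finset.univ.filter (fun f : Fin n ↪ Fin N =>
    t ≤ (-l) * (∑ i, x (f i) - n * μ)) with hFm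
  have hNcast : ((Fintype.card (Fin N) : ℕ) : ℝ) = (N : ℝ) := by simp
  have hsub : (Finset.univ.filter fun f : Fin n ↪ Fin N =>
      ε ≤ |(1 / n) * ∑ i, x (f i) - (1 / N) * ∑ j, x j|) ⊆ Fp ∪ Fm := by
    intro f hf
    rw [Finset.mem_filter] at hf
    have hV := hf.2
    set V : ℝ := ∑ i, x (f i) with hV'
    set W : ℝ := ∑ j, x j with hW'
    have hμW : μ = W / N := by rw [hμ, hNcast]
    have hkey : l * (V - n * μ) = l * n * ((1 / n) * V - (1 / N) * W) := by
      rw [hμW]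
      field_simp
    have htkey : t = l * n * ε := by
      rw [ht, hl]
      field_simp
    rw [Finset.mem_union, hFp, hFm, Finset.mem_filter, Finset.mem_filter]
    rcases le_abs.mp hV with h | h
    · left
      refine ⟨Finset.mem_univ _, ?_⟩
      rw [hkey, htkey]
      have hln : 0 < l * n := by positivity
      exact mul_le_mul_of_nonneg_left h hln.le
    · right
      refine ⟨Finset.mem_univ _, ?_⟩
      have hkey2 : (-l) * (V - n * μ) = l * n * (-((1 / n) * V - (1 / N) * W)) := by
        rw [hμW]
        field_simp
      rw [hkey2, htkey]
      have hln : 0 < l * n := by positivity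
      exact mul_le_mul_of_nonneg_left h hln.le
  -- one-sided bounds via chernoff_side
  set E : ℝ := Real.exp (-2 * n * ε ^ 2 / c ^ 2) with hE
  have hexp_eq : ∀ l' : ℝ, l' ^ 2 = l ^ 2 →
      (n : ℝ) * (l' ^ 2 * (b - a) ^ 2 / 8) - t = -2 * n * ε ^ 2 / c ^ 2 := by
    intro l' hl'
    rw [hl', hl, ht, ← hc]
    have hcne : c ≠ 0 := by linarith
    field_simp
    ring
  have hbp : (Fp.card : ℝ) ≤ ((Tinj (univ : Finset (Fin N)) n).card : ℝ) * E := by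
    have := chernoff_side a b l t x hab hcore hhoeff n hnN'
    rw [hFp]
    rw [card_emb_filter (fun g => t ≤ l * (∑ i, x (g i) - n * μ))]
    rw [hE, ← hexp_eq l rfl]
    exact_mod_cast this
  have hbm : (Fm.card : ℝ) ≤ ((Tinj (univ : Finset (Fin N)) n).card : ℝ) * E := by
    have := chernoff_side a b (-l) t x hab hcore hhoeff n hnN'
    rw [hFm]
    rw [card_emb_filter (fun g => t ≤ (-l) * (∑ i, x (g i) - n * μ))]
    rw [hE, ← hexp_eq (-l) (by ring)]
    exact_mod_cast this
  -- combine
  have hcard : ((Finset.univ.filter fun f : Fin n ↪ Fin N =>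
      ε ≤ |(1 / n) * ∑ i, x (f i) - (1 / N) * ∑ j, x j|).card : ℝ)
      ≤ (Fp.card : ℝ) + (Fm.card : ℝ) := by
    have h1 := Finset.card_le_card hsub
    have h2 := Finset.card_union_le Fp Fm
    exact_mod_cast le_trans h1 h2
  rw [hQeq]
  have hQr : (0:ℝ) < ((Tinj (univ : Finset (Fin N)) n).card : ℝ) := by exact_mod_cast hQpos
  rw [div_le_iff₀ hQr]
  calc ((Finset.univ.filter fun f : Fin n ↪ Fin N =>
        ε ≤ |(1 / n) * ∑ i, x (f i) - (1 / N) * ∑ j, x j|).card : ℝ)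
      ≤ (Fp.card : ℝ) + (Fm.card : ℝ) := hcard
    _ ≤ ((Tinj (univ : Finset (Fin N)) n).card : ℝ) * E
        + ((Tinj (univ : Finset (Fin N)) n).card : ℝ) * E := add_le_add hbp hbm
    _ = 2 * E * ((Tinj (univ : Finset (Fin N)) n).card : ℝ) := by ring
    _ = 2 * Real.exp (-2 * n * ε ^ 2 / c ^ 2)
        * ((Tinj (univ : Finset (Fin N)) n).card : ℝ) := by rw [hE]
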